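/- arXiv:2403.01358 — 6 statements merged into one kernel-verified Lean document; each statement's English description precedes it below -/
import Mathlib

section
/- Let r ≥ 3 be odd. There is a constant C(r) > 0 such that for every N in the range 2^{R−1} < N ≤ 2^R with R ∈ ℕ, the number of v ∈ {1, ..., N} with 2^{⌊√R⌋} dividing r^v − 1 is at most C(r) · N · 2^{−√R}. -/
lemma val_pow_sub_one_le (r : ℕ) (hr : 3 ≤ r) (hodd : Odd r) (v : ℕ) (hv : 1 ≤ v) :
    padicValNat 2 (r ^ v - 1) ≤
      padicValNat 2 (r + 1) + padicValNat 2 (r - 1) + padicValNat 2 v := by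
  haveI : Fact (Nat.Prime 2) := ⟨Nat.prime_two⟩
  obtain ⟨j, hj⟩ := hodd
  have hx : ¬ 2 ∣ r := by omega
  have hval2v : padicValNat 2 (r ^ (2 * v) - 1) + 1 =
      padicValNat 2 (r + 1) + padicValNat 2 (r - 1) + (1 + padicValNat 2 v) := by
    have h := padicValNat.pow_two_sub_pow (x := r) (y := 1) (by omega) (by omega) hx
      (n := 2 * v) (by omega) (even_two_mul v)
    rw [one_pow] at h
    have hv2 : padicValNat 2 (2 * v) = 1 + padicValNat 2 v := by
      rw [padicValNat.mul (by omega) (by omega), padicValNat_self]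
    omega
  have hdvd : r ^ v - 1 ∣ r ^ (2 * v) - 1 := by
    have h := Nat.sub_dvd_pow_sub_pow (r ^ v) 1 2
    simpa [← pow_mul, mul_comm] using h
  have hne : r ^ (2 * v) - 1 ≠ 0 :=
    Nat.sub_ne_zero_of_lt (Nat.one_lt_pow (by omega) (by omega))
  have hle : padicValNat 2 (r ^ v - 1) ≤ padicValNat 2 (r ^ (2 * v) - 1) := by
    rw [← padicValNat_dvd_iff_le hne]
    exact dvd_trans pow_padicValNat_dvd hdvd
  omega

theorem card_V1_bound (r : ℕ) (hr : 3 ≤ r) (hodd : Odd r) :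
    ∃ C : ℝ, 0 < C ∧ ∀ R N : ℕ, 2 ^ (R - 1) < N → N ≤ 2 ^ R →
      (((Finset.Icc 1 N).filter
          (fun v => 2 ^ (Nat.floor (Real.sqrt R)) ∣ r ^ v - 1)).card : ℝ) ≤
        C * N * (2 : ℝ) ^ (-(Real.sqrt R)) := by
  haveI : Fact (Nat.Prime 2) := ⟨Nat.prime_two⟩
  set T : ℕ := padicValNat 2 (r + 1) + padicValNat 2 (r - 1) with hT
  refine ⟨2 ^ (T + 1), by positivity, ?_⟩
  intro R N hN1 hN2
  set a : ℝ := Real.sqrt R with ha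
  have ha0 : 0 ≤ a := Real.sqrt_nonneg _
  set k : ℕ := Nat.floor a with hk
  set m : ℕ := k - T with hm
  -- Step 1: subset
  have hsub : (Finset.Icc 1 N).filter (fun v => 2 ^ k ∣ r ^ v - 1) ⊆
      (Finset.Ioc 0 N).filter (fun v => 2 ^ m ∣ v) := by
    intro v hv
    simp only [Finset.mem_filter, Finset.mem_Icc, Finset.mem_Ioc] at hv ⊢
    obtain ⟨⟨hv1, hvN⟩, hdvd⟩ := hv
    refine ⟨⟨by omega, hvN⟩, ?_⟩
    have hne : r ^ v - 1 ≠ 0 := Nat.sub_ne_zero_of_lt (Nat.one_lt_pow (by omega) (by omega))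
    have h1 : k ≤ padicValNat 2 (r ^ v - 1) := (padicValNat_dvd_iff_le hne).mp hdvd
    have h2 := val_pow_sub_one_le r hr hodd v hv1
    exact (padicValNat_dvd_iff_le (by omega)).mpr (by omega)
  have hcard : ((Finset.Icc 1 N).filter (fun v => 2 ^ k ∣ r ^ v - 1)).card ≤ N / 2 ^ m := by
    rw [← Nat.Ioc_filter_dvd_card_eq_div N (2 ^ m)]
    exact Finset.card_le_card hsub
  -- Step 2: real estimates
  have hak : a < (k : ℝ) + 1 := Nat.lt_floor_add_one a
  have hkTm : k ≤ T + m := by omega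
  have key : (2 : ℝ) ^ a ≤ 2 ^ (T + 1) * 2 ^ m := by
    have h1 : (2 : ℝ) ^ a ≤ (2 : ℝ) ^ ((T + 1 + m : ℕ) : ℝ) := by
      apply Real.rpow_le_rpow_of_exponent_le one_le_two
      push_cast
      have : (k : ℝ) ≤ (T : ℝ) + m := by exact_mod_cast hkTm
      linarith
    rwa [Real.rpow_natCast, pow_add] at h1
  have h2a : (0 : ℝ) < (2 : ℝ) ^ a := Real.rpow_pos_of_pos two_pos a
  calc (((Finset.Icc 1 N).filter (fun v => 2 ^ k ∣ r ^ v - 1)).card : ℝ)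
      ≤ ((N / 2 ^ m : ℕ) : ℝ) := by exact_mod_cast hcard
    _ ≤ (N : ℝ) / (2 ^ m : ℕ) := Nat.cast_div_le
    _ ≤ 2 ^ (T + 1) * N * (2 : ℝ) ^ (-a) := by
        rw [Real.rpow_neg (by norm_num)]
        rw [div_le_iff₀ (by positivity)]
        push_cast
        have h3 : (1 : ℝ) ≤ 2 ^ (T + 1) * ((2 : ℝ) ^ a)⁻¹ * 2 ^ m := by
          rw [mul_assoc, mul_comm (((2:ℝ)^a)⁻¹), ← mul_assoc, ← div_eq_mul_inv,
            le_div_iff₀ h2a, one_mul]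
          exact key
        calc (N : ℝ) = N * 1 := by ring
          _ ≤ N * (2 ^ (T + 1) * ((2 : ℝ) ^ a)⁻¹ * 2 ^ m) := by
              exact mul_le_mul_of_nonneg_left h3 (Nat.cast_nonneg N)
          _ = 2 ^ (T + 1) * N * ((2 : ℝ) ^ a)⁻¹ * 2 ^ m := by ring
end

section
/- Let ϱ be a positive integer with binary digits d_ℓ. If for some k ≥ 1 the pair (d_{k−1}, d_k) equals (0,1) or (1,0), then |cos(π ϱ / 2^{k+1})| ≤ √2/2. -/
open Real

lemma abs_cos_nat_pi_add (q : ℕ) (x : ℝ) : |Real.cos (q * π + x)| = |Real.cos x| := by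
  induction q with
  | zero => simp
  | succ n ih =>
    have : ((n : ℝ) + 1) * π + x = (n * π + x) + π := by ring
    rw [Nat.cast_succ, this, Real.cos_add_pi, abs_neg, ih]

lemma abs_cos_le (x : ℝ) (h1 : π / 4 ≤ x) (h2 : x ≤ 3 * π / 4) :
    |Real.cos x| ≤ Real.sqrt 2 / 2 := by
  have hπ := Real.pi_pos
  rw [abs_le]
  constructor
  · have : Real.cos (3 * π / 4) ≤ Real.cos x :=
      Real.cos_le_cos_of_nonneg_of_le_pi (by linarith) (by linarith) h2
    have h34 : (3 : ℝ) * π / 4 = π - π / 4 := by ring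
    rw [h34, Real.cos_pi_sub, Real.cos_pi_div_four] at this
    linarith
  · have : Real.cos x ≤ Real.cos (π / 4) :=
      Real.cos_le_cos_of_nonneg_of_le_pi (by linarith) (by linarith) h1
    rwa [Real.cos_pi_div_four] at this

theorem cos_bound_of_digit_change (ϱ k : ℕ) (hϱ : 0 < ϱ) (hk : 1 ≤ k)
    (hchange : ϱ.testBit (k - 1) ≠ ϱ.testBit k) :
    |Real.cos (Real.pi * ϱ / 2 ^ (k + 1))| ≤ Real.sqrt 2 / 2 := by
  set m : ℕ := 2 ^ (k - 1) with hm
  have hmpos : 0 < m := Nat.pow_pos (by norm_num)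
  have hk1 : k = (k - 1) + 1 := (Nat.succ_pred_eq_of_pos hk).symm
  have h2k : 2 ^ k = 2 * m := by rw [hk1]; ring
  have h2k1 : 2 ^ (k + 1) = 4 * m := by rw [hk1]; ring
  -- arithmetic: r := ϱ % 2^(k+1) satisfies m ≤ r ≤ 3m
  set a : ℕ := ϱ / m with ha
  have hb1 : ϱ.testBit (k - 1) = decide (a % 2 = 1) := by
    rw [Nat.testBit_eq_decide_div_mod_eq]
  have hb2 : ϱ.testBit k = decide (a / 2 % 2 = 1) := by
    rw [Nat.testBit_eq_decide_div_mod_eq, h2k, Nat.div_div_eq_div_mul, Nat.mul_comm m 2,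
      ← Nat.div_div_eq_div_mul]
  rw [hb1, hb2] at hchange
  have ha4 : a % 4 = 1 ∨ a % 4 = 2 := by
    simp only [ne_eq, decide_eq_decide] at hchange
    omega
  set r : ℕ := ϱ % (4 * m) with hr
  have hrval : r = m * (a % 4) + ϱ % m := by
    have h1 : ϱ = m * a + ϱ % m := by rw [ha]; exact (Nat.div_add_mod ϱ m).symm
    have h2 : ϱ % m < m := Nat.mod_lt _ hmpos
    conv_lhs => rw [hr, h1]
    have : m * a = (4 * m) * (a / 4) + m * (a % 4) := by
      conv_lhs => rw [← Nat.div_add_mod a 4]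
      ring
    rw [this, Nat.add_assoc, Nat.mul_add_mod]
    have hlt : m * (a % 4) + ϱ % m < 4 * m := by
      have : a % 4 < 4 := Nat.mod_lt _ (by norm_num)
      nlinarith
    exact Nat.mod_eq_of_lt hlt
  have hrlb : m ≤ r := by
    rcases ha4 with h | h <;> rw [hrval, h] <;> omega
  have hrub : r ≤ 3 * m := by
    have h2 : ϱ % m < m := Nat.mod_lt _ hmpos
    rw [hrval]; rcases ha4 with h | h <;> rw [h] <;> omega
  -- now the real part
  have hq : ϱ = (4 * m) * (ϱ / (4 * m)) + r := by
    rw [hr]; exact (Nat.div_add_mod ϱ (4 * m)).symm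
  set q : ℕ := ϱ / (4 * m) with hqdef
  have hcast : (Real.pi * ϱ) / 2 ^ (k + 1) = q * π + Real.pi * r / (4 * m) := by
    have hm0 : (4 * (m : ℝ)) ≠ 0 := by positivity
    have hϱr : (ϱ : ℝ) = (4 * m) * q + r := by exact_mod_cast congrArg Nat.cast hq
    have h2R : ((2 : ℝ)) ^ (k + 1) = 4 * (m : ℝ) := by exact_mod_cast h2k1
    rw [h2R, hϱr]
    field_simp
  rw [hcast, abs_cos_nat_pi_add]
  apply abs_cos_le
  · rw [div_le_div_iff₀ (by norm_num) (by positivity)]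
    have : (m : ℝ) ≤ r := by exact_mod_cast hrlb
    nlinarith [Real.pi_pos]
  · rw [div_le_div_iff₀ (by positivity) (by norm_num)]
    have : (r : ℝ) ≤ 3 * m := by exact_mod_cast hrub
    nlinarith [Real.pi_pos]
end

section
/- There exists α ∈ (0, 1/4) such that for all sufficiently large k, the number of binary strings (d_0, ..., d_{k−1}) ∈ {0,1}^k for which the number of indices 1 ≤ ℓ ≤ k−1 with (d_{ℓ−1}, d_ℓ) ∈ {(1,0), (0,1)} is at most α·k, is at most 2^{3k/4}. -/
open Finset

-- reconstruction: a string determined by first bit and change set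
lemma schmidt_aux_eq (k D D' : ℕ) (hD : D < 2^k) (hD' : D' < 2^k)
    (h0 : D.testBit 0 = D'.testBit 0)
    (hs : ∀ ℓ, 1 ≤ ℓ → ℓ < k →
      ((D.testBit (ℓ-1) ≠ D.testBit ℓ) ↔ (D'.testBit (ℓ-1) ≠ D'.testBit ℓ))) :
    D = D' := by
  apply Nat.eq_of_testBit_eq
  intro i
  induction i with
  | zero => exact h0
  | succ j ih =>
    by_cases hk : j + 1 < k
    · have h := hs (j+1) (by omega) hk
      simp only [Nat.add_sub_cancel] at h
      revert h ih
      cases D.testBit j <;> cases D'.testBit j <;> cases D.testBit (j+1) <;>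
        cases D'.testBit (j+1) <;> simp
    · have h1 : D.testBit (j+1) = false :=
        Nat.testBit_lt_two_pow (lt_of_lt_of_le hD (Nat.pow_le_pow_right (by norm_num) (by omega)))
      have h2 : D'.testBit (j+1) = false :=
        Nat.testBit_lt_two_pow (lt_of_lt_of_le hD' (Nat.pow_le_pow_right (by norm_num) (by omega)))
      rw [h1, h2]

-- Chernoff-style tail bound
lemma schmidt_tail (n m : ℕ) (hmn : m ≤ n) :
    ∑ j ∈ range (m+1), ((n.choose j : ℝ)) ≤ 2^m * (3/2)^n := by
  have hbin : ∑ j ∈ range (n+1), (n.choose j : ℝ) * (1/2)^j = (3/2)^n := by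
    have := add_pow (1/2 : ℝ) 1 n
    simp only [one_pow, mul_one] at this
    rw [show (3/2 : ℝ) = 1/2 + 1 by norm_num, this]
    apply Finset.sum_congr rfl
    intro j hj
    ring
  calc ∑ j ∈ range (m+1), ((n.choose j : ℝ))
      ≤ ∑ j ∈ range (m+1), (2:ℝ)^m * ((n.choose j : ℝ) * (1/2)^j) := by
        apply Finset.sum_le_sum
        intro j hj
        have hj' : j ≤ m := Nat.lt_succ_iff.mp (mem_range.mp hj)
        have h2 : (1:ℝ) ≤ 2^m * (1/2)^j := by
          have he : (2:ℝ)^j * (1/2:ℝ)^j = 1 := by rw [← mul_pow]; norm_num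
          have hmono : (2:ℝ)^j ≤ 2^m := pow_le_pow_right₀ (by norm_num) hj'
          nlinarith [pow_nonneg (by norm_num : (0:ℝ) ≤ 1/2) j]
        calc (n.choose j : ℝ) = (n.choose j : ℝ) * 1 := by ring
          _ ≤ (n.choose j : ℝ) * (2^m * (1/2)^j) :=
              mul_le_mul_of_nonneg_left h2 (Nat.cast_nonneg _)
          _ = 2^m * ((n.choose j : ℝ) * (1/2)^j) := by ring
    _ ≤ ∑ j ∈ range (n+1), (2:ℝ)^m * ((n.choose j : ℝ) * (1/2)^j) := by
        apply Finset.sum_le_sum_of_subset_of_nonneg (Finset.range_subset_range.2 (by omega))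
        intro j _ _
        positivity
    _ = 2^m * (3/2)^n := by rw [← Finset.mul_sum, hbin]

lemma schmidt_base : (3/2 : ℝ) ≤ (2:ℝ) ^ ((3/5 : ℝ)) := by
  have h5 : ((2:ℝ) ^ ((3/5):ℝ)) ^ (5:ℕ) = (2:ℝ)^(3:ℕ) := by
    rw [← Real.rpow_natCast ((2:ℝ) ^ ((3/5):ℝ)) 5, ← Real.rpow_mul (by norm_num)]
    norm_num
  apply le_of_pow_le_pow_left₀ (n := 5) (by norm_num) (by positivity)
  rw [h5]; norm_num

lemma schmidt_final (k m : ℕ) (hk : 20 ≤ k) (hm : (m:ℝ) ≤ (k:ℝ)/10) :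
    2 * ((2:ℝ)^m * (3/2)^(k-1)) ≤ (2:ℝ) ^ ((3 * (k:ℝ)) / 4) := by
  have hk20 : (20:ℝ) ≤ (k:ℝ) := by exact_mod_cast hk
  have e2 : ((3:ℝ)/2)^(k-1) ≤ (3/2:ℝ)^k := pow_le_pow_right₀ (by norm_num) (Nat.sub_le k 1)
  have e3 : ((3:ℝ)/2)^k ≤ (2:ℝ)^((3/5:ℝ)*(k:ℝ)) := by
    calc ((3:ℝ)/2)^k ≤ ((2:ℝ)^((3/5:ℝ)))^k := pow_le_pow_left₀ (by norm_num) schmidt_base k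
      _ = (2:ℝ)^((3/5:ℝ)*(k:ℝ)) := by
          rw [← Real.rpow_natCast ((2:ℝ)^((3/5):ℝ)) k, ← Real.rpow_mul (by norm_num)]
  have e1 : (2:ℝ)^m = (2:ℝ)^((m:ℝ)) := (Real.rpow_natCast 2 m).symm
  have e0 : (2:ℝ) = (2:ℝ)^((1:ℝ)) := (Real.rpow_one 2).symm
  calc 2 * ((2:ℝ)^m * (3/2)^(k-1))
      ≤ 2 * ((2:ℝ)^m * (2:ℝ)^((3/5:ℝ)*(k:ℝ))) := by
        have h1 : (0:ℝ) ≤ (2:ℝ)^m := by positivity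
        nlinarith [le_trans e2 e3, pow_nonneg (by norm_num : (0:ℝ) ≤ 3/2) (k-1)]
    _ = (2:ℝ)^((1:ℝ) + (m:ℝ) + (3/5:ℝ)*(k:ℝ)) := by
        rw [e1, Real.rpow_add (by norm_num), Real.rpow_add (by norm_num), Real.rpow_one]
        ring
    _ ≤ (2:ℝ) ^ ((3 * (k:ℝ)) / 4) := by
        apply Real.rpow_le_rpow_of_exponent_le (by norm_num)
        linarith

theorem schmidt_few_digit_changes_rare :
    ∃ α : ℝ, 0 < α ∧ α < 1 / 4 ∧ ∃ k₀ : ℕ, ∀ k : ℕ, k₀ ≤ k →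
      (((Finset.range (2 ^ k)).filter (fun D =>
          ((((Finset.Ico 1 k).filter
              (fun ℓ => D.testBit (ℓ - 1) ≠ D.testBit ℓ)).card : ℝ)) ≤ α * k)).card : ℝ)
        ≤ (2 : ℝ) ^ ((3 * (k : ℝ)) / 4) := by
  refine ⟨1/10, by norm_num, by norm_num, 20, fun k hk => ?_⟩
  set m : ℕ := ⌊(1/10 : ℝ) * k⌋₊ with hmdef
  have hmk : (m:ℝ) ≤ (1/10 : ℝ) * k := Nat.floor_le (by positivity)
  have hkR : (20:ℝ) ≤ (k:ℝ) := by exact_mod_cast hk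
  have hmn : m ≤ k - 1 := by
    have : (m:ℝ) ≤ (k:ℝ) / 10 := by linarith
    have h2 : (m:ℝ) < (k:ℝ) - 1 := by linarith
    have : (m:ℝ) < ((k-1 : ℕ):ℝ) := by
      rw [Nat.cast_sub (by omega)]; push_cast; linarith
    exact_mod_cast this.le
  -- the injection
  set S := (Finset.range (2 ^ k)).filter (fun D =>
      ((((Finset.Ico 1 k).filter
          (fun ℓ => D.testBit (ℓ - 1) ≠ D.testBit ℓ)).card : ℝ)) ≤ (1/10 : ℝ) * k) with hS
  set T : Finset (Bool × Finset ℕ) :=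
      Finset.univ ×ˢ ((Finset.Ico 1 k).powerset.filter (fun s => s.card ≤ m)) with hT
  have hcard1 : S.card ≤ T.card := by
    apply Finset.card_le_card_of_injOn
      (fun D => (D.testBit 0, (Finset.Ico 1 k).filter (fun ℓ => D.testBit (ℓ-1) ≠ D.testBit ℓ)))
    · intro D hD
      rw [hS, Finset.mem_coe, Finset.mem_filter] at hD
      rw [hT, Finset.mem_coe, Finset.mem_product]
      refine ⟨Finset.mem_univ _, ?_⟩
      rw [Finset.mem_filter, Finset.mem_powerset]
      exact ⟨Finset.filter_subset _ _, Nat.le_floor hD.2⟩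
    · intro D hD D' hD' hf
      have hD1 : D < 2^k := Finset.mem_range.mp (Finset.mem_filter.mp (Finset.mem_coe.mp hD)).1
      have hD'1 : D' < 2^k := Finset.mem_range.mp (Finset.mem_filter.mp (Finset.mem_coe.mp hD')).1
      have h0 : D.testBit 0 = D'.testBit 0 := congrArg Prod.fst hf
      have hsets := congrArg Prod.snd hf
      simp only at hsets
      apply schmidt_aux_eq k D D' hD1 hD'1 h0
      intro ℓ h1 h2
      have := Finset.ext_iff.mp hsets ℓ
      simp only [Finset.mem_filter, Finset.mem_Ico] at this
      constructor
      · intro hne; exact (this.mp ⟨⟨h1, h2⟩, hne⟩).2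
      · intro hne; exact (this.mpr ⟨⟨h1, h2⟩, hne⟩).2
  have hcard2 : T.card ≤ 2 * ∑ j ∈ Finset.range (m+1), (k-1).choose j := by
    rw [hT, Finset.card_product, Finset.card_univ, Fintype.card_bool]
    have hsub : (Finset.Ico 1 k).powerset.filter (fun s => s.card ≤ m) ⊆
        (Finset.range (m+1)).biUnion (fun j => (Finset.Ico 1 k).powersetCard j) := by
      intro s hs
      rw [Finset.mem_filter, Finset.mem_powerset] at hs
      rw [Finset.mem_biUnion]
      exact ⟨s.card, Finset.mem_range.mpr (by omega), Finset.mem_powersetCard.mpr ⟨hs.1, rfl⟩⟩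
    have := (Finset.card_le_card hsub).trans (Finset.card_biUnion_le)
    simp only [Finset.card_powersetCard, Nat.card_Ico] at this
    have hIco : k - 1 = (Finset.Ico 1 k).card := by rw [Nat.card_Ico]
    calc 2 * ((Finset.Ico 1 k).powerset.filter (fun s => s.card ≤ m)).card
        ≤ 2 * ∑ j ∈ Finset.range (m+1), ((Finset.Ico 1 k).card).choose j := by
          apply Nat.mul_le_mul_left
          exact (Finset.card_le_card hsub).trans
            ((Finset.card_biUnion_le).trans (le_of_eq (by
              apply Finset.sum_congr rfl; intro j _; rw [Finset.card_powersetCard])))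
      _ = 2 * ∑ j ∈ Finset.range (m+1), (k-1).choose j := by rw [Nat.card_Ico]
  have hchain : (S.card : ℝ) ≤ 2 * ((2:ℝ)^m * (3/2)^(k-1)) := by
    calc (S.card : ℝ) ≤ ((2 * ∑ j ∈ Finset.range (m+1), (k-1).choose j : ℕ) : ℝ) := by
          exact_mod_cast hcard1.trans hcard2
      _ = 2 * ∑ j ∈ Finset.range (m+1), ((k-1).choose j : ℝ) := by push_cast; ring
      _ ≤ 2 * ((2:ℝ)^m * (3/2)^(k-1)) := by
          have := schmidt_tail (k-1) m hmn
          linarith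
  exact hchain.trans (schmidt_final k m hk (by linarith))
end

section
/- Let K_ℓ be a strictly increasing sequence of positive integers with K_0 = 0 and lim_{ℓ→∞} K_ℓ/K_{ℓ+1} = 0. Let b = 2^M·B with M, B positive integers and B odd, and fix 0 < α < M/log₂ b. Let x ∈ [0,1) have binary digits d_k(x), and suppose d_k(x) = 0 for all K_{ℓ−1}+1 ≤ k ≤ K_ℓ. Then for all n with K_{ℓ−1}/M < n ≤ 1 + αK_ℓ/M and all sufficiently large ℓ, the fractional part {x b^n} satisfies {x b^n} ≤ b·c^{K_ℓ} where c = ½ b^{α/M} < 1. -/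
open Filter

theorem fract_xbn_small (K : ℕ → ℕ) (hK0 : K 0 = 0) (hKmono : StrictMono K)
    (hKratio : Tendsto (fun ℓ => (K ℓ : ℝ) / (K (ℓ + 1) : ℝ)) atTop (nhds 0))
    (b M B : ℕ) (hM : 0 < M) (hB : 0 < B) (hBodd : Odd B) (hb : b = 2 ^ M * B)
    (α : ℝ) (hα0 : 0 < α) (hα : α < (M : ℝ) / Real.logb 2 b)
    (d : ℕ → ℕ) (hd : ∀ k, d k ≤ 1)
    (x : ℝ) (hx : x = ∑' k : ℕ, (d (k + 1) : ℝ) / 2 ^ (k + 1))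
    (hx0 : 0 ≤ x) (hx1 : x < 1) :
    ∃ L : ℕ, ∀ ℓ : ℕ, L ≤ ℓ →
      (∀ k : ℕ, K (ℓ - 1) + 1 ≤ k → k ≤ K ℓ → d k = 0) →
      ∀ n : ℕ, (K (ℓ - 1) : ℝ) / M < n → (n : ℝ) ≤ 1 + α * (K ℓ) / M →
        Int.fract (x * (b : ℝ) ^ n) ≤ (b : ℝ) * ((1 / 2) * (b : ℝ) ^ (α / M)) ^ (K ℓ) := by
  classical
  refine ⟨0, fun ℓ _ hdig n hn1 hn2 => ?_⟩
  have hM' : (0:ℝ) < M := by exact_mod_cast hM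
  have hb2 : (2:ℝ) ≤ (b:ℝ) := by
    have h2 : 2 ≤ b := by
      rw [hb]
      calc 2 = 2 ^ 1 * 1 := by norm_num
        _ ≤ 2 ^ M * B := Nat.mul_le_mul (Nat.pow_le_pow_right (by norm_num) hM) hB
    exact_mod_cast h2
  have hb1 : (1:ℝ) ≤ (b:ℝ) := by linarith
  have hb0 : (0:ℝ) < (b:ℝ) := by linarith
  set f : ℕ → ℝ := fun k => (d (k + 1) : ℝ) / 2 ^ (k + 1) with hfdef
  have hf0 : ∀ k, 0 ≤ f k := fun k => by positivity
  have hfle : ∀ k, f k ≤ (1/2 : ℝ) ^ (k + 1) := by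
    intro k
    have hdk : (d (k + 1) : ℝ) ≤ 1 := by exact_mod_cast hd (k + 1)
    have : (1/2 : ℝ) ^ (k + 1) = 1 / 2 ^ (k + 1) := by
      rw [one_div, inv_pow, one_div]
    rw [this]
    apply div_le_div_of_nonneg_right hdk (by positivity) |>.trans_eq rfl
  have hg : Summable (fun k : ℕ => (1/2 : ℝ) ^ (k + 1)) := by
    simpa [pow_succ] using summable_geometric_two.mul_right (1/2 : ℝ)
  have hsum : Summable f := Summable.of_nonneg_of_le hf0 hfle hg
  -- split x at K ℓ
  have hsplit := Summable.sum_add_tsum_nat_add (K ℓ) hsum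
  set T := ∑' k : ℕ, f (k + K ℓ) with hT
  have hxeq : x = (∑ k ∈ Finset.range (K ℓ), f k) + T := by
    rw [hx]; exact hsplit.symm
  -- middle digits vanish: reduce finite sum to range K (ℓ-1)
  have hKle : K (ℓ - 1) ≤ K ℓ := hKmono.monotone (Nat.sub_le ℓ 1)
  have hhead : (∑ k ∈ Finset.range (K ℓ), f k)
      = ∑ k ∈ Finset.range (K (ℓ - 1)), f k := by
    refine (Finset.sum_subset (Finset.range_subset_range.mpr hKle) ?_).symm
    intro k hk hk'
    simp only [Finset.mem_range, not_lt] at hk hk'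
    have : d (k + 1) = 0 := hdig (k + 1) (by omega) (by omega)
    simp [hfdef, this]
  -- K (ℓ-1) < M * n
  have hKMn : K (ℓ - 1) < M * n := by
    have := (div_lt_iff₀ hM').mp hn1
    have : (K (ℓ - 1) : ℝ) < (M * n : ℕ) := by push_cast; nlinarith
    exact_mod_cast this
  -- head * b^n is a natural number
  have hbn : (b : ℝ) ^ n = 2 ^ (M * n) * (B : ℝ) ^ n := by
    rw [hb]; push_cast; rw [mul_pow, ← pow_mul]
  have hint : (∑ k ∈ Finset.range (K (ℓ - 1)), f k) * (b : ℝ) ^ n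
      = ((∑ k ∈ Finset.range (K (ℓ - 1)), d (k + 1) * 2 ^ (M * n - (k + 1)) * B ^ n : ℕ) : ℝ) := by
    rw [Finset.sum_mul]
    push_cast
    refine Finset.sum_congr rfl fun k hk => ?_
    have hk' : k + 1 ≤ M * n := by
      have := Finset.mem_range.mp hk; omega
    have h2 : (2:ℝ) ^ (M * n - (k + 1)) * 2 ^ (k + 1) = 2 ^ (M * n) := by
      rw [← pow_add, Nat.sub_add_cancel hk']
    rw [hfdef, hbn]
    field_simp
    rw [← h2]
    ring
  -- fract equals fract of tail part
  have hfract : Int.fract (x * (b : ℝ) ^ n) = Int.fract (T * (b : ℝ) ^ n) := by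
    rw [hxeq, hhead, add_mul, hint, add_comm, Int.fract_add_natCast]
  -- tail bound
  have hT0 : 0 ≤ T := tsum_nonneg fun k => hf0 _
  have hTle : T ≤ (1/2 : ℝ) ^ (K ℓ) := by
    have hsum' : Summable fun k : ℕ => f (k + K ℓ) := hsum.comp_injective (add_left_injective (K ℓ))
    have hg' : Summable fun k : ℕ => (1/2 : ℝ) ^ (k + K ℓ + 1) := by
      have := hg.comp_injective (add_left_injective (K ℓ))
      exact this
    have h1 : T ≤ ∑' k : ℕ, (1/2 : ℝ) ^ (k + K ℓ + 1) :=
      Summable.tsum_le_tsum (fun k => hfle (k + K ℓ)) hsum' hg'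
    have h2 : ∑' k : ℕ, (1/2 : ℝ) ^ (k + K ℓ + 1) = (1/2 : ℝ) ^ (K ℓ) := by
      have : ∀ k : ℕ, (1/2 : ℝ) ^ (k + K ℓ + 1) = (1/2 : ℝ) ^ k * (1/2) ^ (K ℓ + 1) := by
        intro k; rw [← pow_add]; ring_nf
      rw [tsum_congr this, tsum_mul_right, tsum_geometric_two]
      rw [pow_succ]; ring
    linarith
  -- fract ≤ self
  have hTb0 : 0 ≤ T * (b : ℝ) ^ n := by positivity
  have hfle' : Int.fract (T * (b : ℝ) ^ n) ≤ T * (b : ℝ) ^ n := by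
    have hfl : (0:ℝ) ≤ (⌊T * (b : ℝ) ^ n⌋ : ℝ) := by
      exact_mod_cast Int.floor_nonneg.mpr hTb0
    rw [Int.fract]; linarith
  -- final exponent inequality
  have hrpow : (b : ℝ) ^ n ≤ (b : ℝ) * ((b : ℝ) ^ (α / M)) ^ (K ℓ) := by
    have h1 : ((b : ℝ) ^ (α / M)) ^ (K ℓ) = (b : ℝ) ^ (α / M * K ℓ) := by
      rw [← Real.rpow_natCast ((b : ℝ) ^ (α / M)) (K ℓ), ← Real.rpow_mul hb0.le]
    have h2 : (b : ℝ) * (b : ℝ) ^ (α / M * K ℓ) = (b : ℝ) ^ (1 + α / M * K ℓ) := by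
      rw [Real.rpow_add hb0, Real.rpow_one]
    have h3 : (b : ℝ) ^ n = (b : ℝ) ^ (n : ℝ) := by
      rw [Real.rpow_natCast]
    rw [h1, h2, h3]
    apply Real.rpow_le_rpow_of_exponent_le hb1
    have : α * (K ℓ) / M = α / M * K ℓ := by ring
    linarith [hn2, this ▸ hn2]
  calc Int.fract (x * (b : ℝ) ^ n) = Int.fract (T * (b : ℝ) ^ n) := hfract
    _ ≤ T * (b : ℝ) ^ n := hfle'
    _ ≤ (1/2 : ℝ) ^ (K ℓ) * (b : ℝ) ^ n := by
        apply mul_le_mul_of_nonneg_right hTle (by positivity)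
    _ ≤ (1/2 : ℝ) ^ (K ℓ) * ((b : ℝ) * ((b : ℝ) ^ (α / M)) ^ (K ℓ)) := by
        apply mul_le_mul_of_nonneg_left hrpow (by positivity)
    _ = (b : ℝ) * ((1 / 2) * (b : ℝ) ^ (α / M)) ^ (K ℓ) := by
        rw [mul_pow]; ring
end

section
/- Let b ≥ 2 be an even integer and x ∈ [0,1) a number whose binary expansion contains, for infinitely many ℓ, a block of zero digits occupying positions K_{ℓ−1}+1 through K_ℓ, where K_ℓ is strictly increasing with K_ℓ/K_{ℓ+1} → 0. Then limsup_{N→∞} (1/N) Σ_{n=1}^{N} cos(2π x b^n) = 1, and consequently the sequence (x b^n)_{n≥1} is not uniformly distributed modulo 1, so x is not normal to base b. -/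
open Filter

set_option maxHeartbeats 1000000

lemma digit_summable (d : ℕ → ℕ) (hd : ∀ k, d k ≤ 1) :
    Summable (fun k : ℕ => (d (k + 1) : ℝ) / 2 ^ (k + 1)) := by
  apply Summable.of_nonneg_of_le (fun k => by positivity) (fun k => ?_)
    summable_geometric_two
  have h1 : (d (k + 1) : ℝ) ≤ 1 := by exact_mod_cast hd (k + 1)
  calc (d (k + 1) : ℝ) / 2 ^ (k + 1) ≤ 1 / 2 ^ (k + 1) := by gcongr
    _ ≤ 1 / 2 ^ k := by gcongr <;> norm_num
    _ = (1 / 2 : ℝ) ^ k := by rw [div_pow, one_pow]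

lemma tail_bound (d : ℕ → ℕ) (hd : ∀ k, d k ≤ 1) (x : ℝ)
    (hx : x = ∑' k : ℕ, (d (k + 1) : ℝ) / 2 ^ (k + 1))
    (n M : ℕ) (hnM : n ≤ M)
    (hzero : ∀ k, n + 1 ≤ k → k ≤ M → d k = 0) :
    ∃ A : ℕ, ∃ r : ℝ, x * 2 ^ n = A + r ∧ 0 ≤ r ∧ r ≤ (2 : ℝ) ^ n / 2 ^ M := by
  have hsum := digit_summable d hd
  set f : ℕ → ℝ := fun k => (d (k + 1) : ℝ) / 2 ^ (k + 1) with hf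
  have hsum2 : Summable (fun k => f k * 2 ^ n) := hsum.mul_right _
  have h1 : x * 2 ^ n = ∑' k, f k * 2 ^ n := by rw [hx, tsum_mul_right]
  have h2 := Summable.sum_add_tsum_nat_add (f := fun k => f k * 2 ^ n) n hsum2
  refine ⟨∑ i ∈ Finset.range n, d (i + 1) * 2 ^ (n - (i + 1)),
    ∑' k, f (k + n) * 2 ^ n, ?_, ?_, ?_⟩
  · rw [h1, ← h2]
    congr 1
    push_cast
    apply Finset.sum_congr rfl
    intro i hi
    have hi' : i + 1 ≤ n := Finset.mem_range.1 hi
    have h2n : (2 : ℝ) ^ n = 2 ^ (n - (i + 1)) * 2 ^ (i + 1) := by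
      rw [← pow_add, Nat.sub_add_cancel hi']
    simp only [hf]
    rw [h2n]
    field_simp
  · exact tsum_nonneg fun k => by positivity
  · -- split again at M - n
    have hsum3 : Summable (fun k => f (k + n) * 2 ^ n) := by
      exact (summable_nat_add_iff n).2 hsum2
    have h3 := Summable.sum_add_tsum_nat_add (f := fun k => f (k + n) * 2 ^ n) (M - n) hsum3
    have hfirst : ∑ i ∈ Finset.range (M - n), f (i + n) * 2 ^ n = 0 := by
      apply Finset.sum_eq_zero
      intro i hi
      have hi' : i < M - n := Finset.mem_range.1 hi
      have : d (i + n + 1) = 0 := hzero _ (by omega) (by omega)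
      simp [hf, this]
    have hrw : ∀ k : ℕ, f (k + (M - n) + n) * 2 ^ n = f (k + M) * 2 ^ n := by
      intro k; congr 2; omega
    have h4 : ∑' k, f (k + n) * 2 ^ n = ∑' k, f (k + M) * 2 ^ n := by
      rw [← h3, hfirst, zero_add]
      exact tsum_congr hrw
    rw [h4]
    have hbound : ∀ k : ℕ, f (k + M) * 2 ^ n ≤ (1 / 2 : ℝ) ^ (k + 1) * (2 ^ n / 2 ^ M) := by
      intro k
      have hdk : (d (k + M + 1) : ℝ) ≤ 1 := by exact_mod_cast hd _
      have hdk0 : (0:ℝ) ≤ (d (k + M + 1) : ℝ) := by positivity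
      simp only [hf]
      have hpow : (2 : ℝ) ^ (k + M + 1) = 2 ^ (k + 1) * 2 ^ M := by
        rw [← pow_add]; ring_nf
      rw [div_pow, one_pow, hpow]
      rw [div_mul_eq_mul_div, div_le_iff₀ (by positivity)]
      have h2n0 : (0:ℝ) < (2:ℝ)^n := by positivity
      calc (d (k + M + 1) : ℝ) * 2 ^ n ≤ 1 * 2 ^ n := by gcongr
        _ = 2 ^ n := one_mul _
        _ ≤ (2 ^ n / 2 ^ M) * (2 ^ (k + 1) * 2 ^ M) / 2 ^ (k + 1) := by
            rw [div_mul_eq_mul_div, mul_comm ((2:ℝ)^(k+1)) ((2:ℝ)^M)]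
            field_simp
            exact le_refl _
      ring_nf
      exact le_refl _
    have hsumgeo : Summable (fun k : ℕ => (1 / 2 : ℝ) ^ (k + 1) * (2 ^ n / 2 ^ M)) :=
      ((summable_nat_add_iff 1).2 summable_geometric_two).mul_right _
    have hs5 : Summable (fun k : ℕ => f (k + M) * 2 ^ n) := (summable_nat_add_iff M).2 hsum2
    calc ∑' k, f (k + M) * 2 ^ n ≤ ∑' k, (1 / 2 : ℝ) ^ (k + 1) * (2 ^ n / 2 ^ M) :=
          Summable.tsum_le_tsum hbound hs5 hsumgeo
      _ = (∑' k : ℕ, (1 / 2 : ℝ) ^ (k + 1)) * (2 ^ n / 2 ^ M) := tsum_mul_right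
      _ = 1 * (2 ^ n / 2 ^ M) := by
          congr 1
          have : ∑' k : ℕ, (1 / 2 : ℝ) ^ (k + 1) = (1/2) * ∑' k : ℕ, (1 / 2 : ℝ) ^ k := by
            rw [← tsum_mul_left]
            exact tsum_congr fun k => by ring
          rw [this, tsum_geometric_of_lt_one (by norm_num) (by norm_num)]
          norm_num
      _ = 2 ^ n / 2 ^ M := one_mul _

lemma cos_lower (b c : ℕ) (hbc : b = 2 * c) (d : ℕ → ℕ) (hd : ∀ k, d k ≤ 1)
    (x : ℝ) (hx : x = ∑' k : ℕ, (d (k + 1) : ℝ) / 2 ^ (k + 1))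
    (n M : ℕ) (hnM : n ≤ M)
    (hzero : ∀ k, n + 1 ≤ k → k ≤ M → d k = 0) :
    1 - 32 * ((b : ℝ) ^ n / 2 ^ M) ^ 2 ≤ Real.cos (2 * Real.pi * x * (b : ℝ) ^ n) := by
  obtain ⟨A, r, hAr, hr0, hrle⟩ := tail_bound d hd x hx n M hnM hzero
  have hbr : (b : ℝ) ^ n = 2 ^ n * (c : ℝ) ^ n := by
    rw [hbc]; push_cast; rw [mul_pow]
  have hxb : x * (b : ℝ) ^ n = r * (c : ℝ) ^ n + (A * c ^ n : ℕ) := by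
    push_cast
    calc x * (b : ℝ) ^ n = (x * 2 ^ n) * (c : ℝ) ^ n := by rw [hbr]; ring
      _ = ((A : ℝ) + r) * (c : ℝ) ^ n := by rw [hAr]
      _ = r * (c : ℝ) ^ n + (A : ℝ) * (c : ℝ) ^ n := by ring
  have harg : 2 * Real.pi * x * (b : ℝ) ^ n
      = 2 * Real.pi * (r * (c : ℝ) ^ n) + (A * c ^ n : ℕ) * (2 * Real.pi) := by
    rw [mul_assoc, hxb]; ring
  rw [harg, Real.cos_add_nat_mul_two_pi]
  have hkey := Real.one_sub_sq_div_two_le_cos (x := 2 * Real.pi * (r * (c : ℝ) ^ n))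
  have hc0 : (0 : ℝ) ≤ (c : ℝ) ^ n := by positivity
  have ht : r * (c : ℝ) ^ n ≤ (b : ℝ) ^ n / 2 ^ M := by
    calc r * (c : ℝ) ^ n ≤ (2 ^ n / 2 ^ M) * (c : ℝ) ^ n :=
          mul_le_mul_of_nonneg_right hrle hc0
      _ = (b : ℝ) ^ n / 2 ^ M := by rw [hbr]; ring
  have ht0 : 0 ≤ r * (c : ℝ) ^ n := mul_nonneg hr0 hc0
  have hpi : Real.pi ≤ 4 := Real.pi_le_four
  have hpi0 : 0 < Real.pi := Real.pi_pos
  have hpisq : Real.pi ^ 2 ≤ 16 := by nlinarith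
  have htu : (r * (c:ℝ)^n) ^ 2 ≤ ((b:ℝ)^n / 2^M) ^ 2 := by nlinarith
  have hprod : Real.pi ^ 2 * (r * (c:ℝ)^n) ^ 2 ≤ 16 * ((b:ℝ)^n / 2^M) ^ 2 :=
    mul_le_mul hpisq htu (sq_nonneg _) (by norm_num)
  nlinarith [hkey, hprod]

/-- A real sequence is uniformly distributed modulo 1, via Weyl's criterion. -/
def UnifDistMod1 (s : ℕ → ℝ) : Prop :=
  ∀ h : ℤ, h ≠ 0 →
    Tendsto (fun N : ℕ => (1 / (N : ℂ)) *
      ∑ n ∈ Finset.Icc 1 N, Complex.exp (2 * Real.pi * Complex.I * h * s n))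
      atTop (nhds 0)

/-- Normality to base `b` via Wall's characterization. -/
def NormalToBase (b : ℕ) (x : ℝ) : Prop :=
  UnifDistMod1 (fun n => x * (b : ℝ) ^ n)

theorem not_normal_even_base (K : ℕ → ℕ) (hK0 : K 0 = 0) (hKmono : StrictMono K)
    (hKratio : Tendsto (fun ℓ => (K ℓ : ℝ) / (K (ℓ + 1) : ℝ)) atTop (nhds 0))
    (b : ℕ) (hb : 2 ≤ b) (hbeven : Even b)
    (d : ℕ → ℕ) (hd : ∀ k, d k ≤ 1)
    (x : ℝ) (hx : x = ∑' k : ℕ, (d (k + 1) : ℝ) / 2 ^ (k + 1))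
    (hx0 : 0 ≤ x) (hx1 : x < 1)
    (hblocks : ∀ L : ℕ, ∃ ℓ : ℕ, L ≤ ℓ ∧
      ∀ k : ℕ, K (ℓ - 1) + 1 ≤ k → k ≤ K ℓ → d k = 0) :
    limsup (fun N : ℕ => (1 / (N : ℝ)) *
        ∑ n ∈ Finset.Icc 1 N, Real.cos (2 * Real.pi * x * (b : ℝ) ^ n)) atTop = 1 ∧
    ¬ UnifDistMod1 (fun n => x * (b : ℝ) ^ n) ∧
    ¬ NormalToBase b x := by
  obtain ⟨c, hc⟩ := hbeven
  have hbc : b = 2 * c := by omega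
  have hc1 : 1 ≤ c := by omega
  set f : ℕ → ℝ := fun N : ℕ => (1 / (N : ℝ)) *
      ∑ n ∈ Finset.Icc 1 N, Real.cos (2 * Real.pi * x * (b : ℝ) ^ n) with hf
  -- global bounds
  have hub : ∀ N : ℕ, f N ≤ 1 := by
    intro N
    rcases Nat.eq_zero_or_pos N with h | h
    · subst h; simp [hf]
    · have hN0 : (0:ℝ) < N := by exact_mod_cast h
      have hS : ∑ n ∈ Finset.Icc 1 N, Real.cos (2 * Real.pi * x * (b : ℝ) ^ n) ≤ (N:ℝ) := by
        calc ∑ n ∈ Finset.Icc 1 N, Real.cos (2 * Real.pi * x * (b : ℝ) ^ n)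
            ≤ ∑ n ∈ Finset.Icc 1 N, (1:ℝ) := Finset.sum_le_sum fun i _ => Real.cos_le_one _
          _ = (N:ℝ) := by simp [Nat.card_Icc]
      have := mul_le_mul_of_nonneg_left hS (by positivity : (0:ℝ) ≤ 1 / N)
      simpa [hf, one_div, inv_mul_cancel₀ (ne_of_gt hN0)] using this
  have hlb : ∀ N : ℕ, -1 ≤ f N := by
    intro N
    rcases Nat.eq_zero_or_pos N with h | h
    · subst h; simp [hf]
    · have hN0 : (0:ℝ) < N := by exact_mod_cast h
      have hS : -(N:ℝ) ≤ ∑ n ∈ Finset.Icc 1 N, Real.cos (2 * Real.pi * x * (b : ℝ) ^ n) := by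
        calc -(N:ℝ) = ∑ n ∈ Finset.Icc 1 N, (-1:ℝ) := by simp [Nat.card_Icc]
          _ ≤ _ := Finset.sum_le_sum fun i _ => Real.neg_one_le_cos _
      have := mul_le_mul_of_nonneg_left hS (by positivity : (0:ℝ) ≤ 1 / N)
      have h2 : (1/(N:ℝ)) * (-(N:ℝ)) = -1 := by field_simp
      rw [h2] at this
      exact this
  have hbddAbove : IsBoundedUnder (· ≤ ·) atTop f := isBoundedUnder_of ⟨1, hub⟩
  have hbddBelow : IsBoundedUnder (· ≥ ·) atTop f := isBoundedUnder_of ⟨-1, hlb⟩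
  -- frequently close to 1
  have hfreq : ∀ ε : ℝ, 0 < ε → ∃ᶠ N in atTop, 1 - ε ≤ f N := by
    intro ε hε
    rw [frequently_atTop]
    intro M0
    have hb0 : (0:ℝ) < b := by positivity
    set δ : ℝ := min (ε / (16 * b)) (1 / (8 * b)) with hδdef
    have hδ : 0 < δ := lt_min (by positivity) (by positivity)
    obtain ⟨L₁, hL₁⟩ := eventually_atTop.1 (hKratio.eventually (gt_mem_nhds hδ))
    obtain ⟨N₁, hN₁⟩ := exists_pow_lt_of_lt_one (x := ε / 64) (y := (1/2:ℝ)) (by positivity) (by norm_num)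
    set L : ℕ := max (L₁ + 1) (2 * b * (max M0 N₁) + 4 * b + 1) with hLdef
    obtain ⟨ℓ, hℓL, hz⟩ := hblocks L
    have hℓ1 : 1 ≤ ℓ := le_trans (by omega) (le_trans (le_max_left _ _) hℓL)
    have hKℓℓ : ℓ ≤ K ℓ := hKmono.le_apply
    have hKℓ : 2 * b * (max M0 N₁) + 4 * b + 1 ≤ K ℓ :=
      le_trans (le_trans (le_max_right _ _) hℓL) hKℓℓ
    set N : ℕ := K ℓ / (2 * b) with hNdef
    have h2b : 0 < 2 * b := by omega
    have hN2b : 2 * b * N ≤ K ℓ := by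
      rw [mul_comm]; exact Nat.div_mul_le_self _ _
    -- basic numeric facts about N
    have hKa : 2 * b * M0 ≤ K ℓ := by
      refine le_trans (Nat.mul_le_mul_left _ (le_max_left M0 N₁)) ?_
      exact le_trans (Nat.le_add_right _ _) (le_trans (Nat.le_add_right _ _) hKℓ)
    have hKb : 2 * b * N₁ ≤ K ℓ := by
      refine le_trans (Nat.mul_le_mul_left _ (le_max_right M0 N₁)) ?_
      exact le_trans (Nat.le_add_right _ _) (le_trans (Nat.le_add_right _ _) hKℓ)
    have hKc : 4 * b + 1 ≤ K ℓ := by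
      rw [add_assoc] at hKℓ
      exact le_trans (Nat.le_add_left _ _) hKℓ
    have hNM0 : M0 ≤ N := by
      rw [hNdef, Nat.le_div_iff_mul_le h2b, mul_comm M0 (2 * b)]; exact hKa
    have hNN1 : N₁ ≤ N := by
      rw [hNdef, Nat.le_div_iff_mul_le h2b, mul_comm N₁ (2 * b)]; exact hKb
    have hN2 : 2 ≤ N := by
      rw [hNdef, Nat.le_div_iff_mul_le h2b]
      calc 2 * (2 * b) = 4 * b := by ring
        _ ≤ 4 * b + 1 := Nat.le_succ _
        _ ≤ K ℓ := hKc
    have hNK : N ≤ K ℓ := le_trans (Nat.le_mul_of_pos_left N h2b) hN2b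
    have hKlt : K ℓ < 2 * b * N + 2 * b := by
      have hmod := Nat.mod_lt (K ℓ) h2b
      conv_lhs => rw [← Nat.div_add_mod (K ℓ) (2 * b)]
      rw [← hNdef]
      exact Nat.add_lt_add_left hmod _
    have hK4bN : K ℓ ≤ 4 * b * N := by
      have h2bN : 2 * b ≤ 2 * b * N := Nat.le_mul_of_pos_right (2 * b) (by omega)
      calc K ℓ ≤ 2 * b * N + 2 * b := le_of_lt hKlt
        _ ≤ 2 * b * N + 2 * b * N := Nat.add_le_add_left h2bN _
        _ = 4 * b * N := by ring
    -- the ratio bound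
    have hℓe : ℓ - 1 + 1 = ℓ := by omega
    have hρ := hL₁ (ℓ - 1) (by omega)
    rw [hℓe] at hρ
    set J : ℕ := K (ℓ - 1) with hJdef
    have hKr0 : (0 : ℝ) < (K ℓ : ℝ) := by
      have : 0 < K ℓ := by omega
      exact_mod_cast this
    have hJr : (J : ℝ) < δ * (K ℓ : ℝ) := (div_lt_iff₀ hKr0).1 hρ
    have hNr0 : (0 : ℝ) < (N : ℝ) := by
      have : 0 < N := by omega
      exact_mod_cast this
    have hKr4bN : (K ℓ : ℝ) ≤ 4 * (b : ℝ) * (N : ℝ) := by exact_mod_cast hK4bN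
    have hδa : δ ≤ ε / (16 * b) := min_le_left _ _
    have hδb : δ ≤ 1 / (8 * b) := min_le_right _ _
    have hbR : (0 : ℝ) < (b : ℝ) := by exact_mod_cast (by omega : 0 < b)
    have hJhalf : (J : ℝ) < (N : ℝ) / 2 := by
      have h1 : δ * (K ℓ : ℝ) ≤ (1 / (8 * b)) * (4 * (b : ℝ) * (N : ℝ)) :=
        mul_le_mul hδb hKr4bN (le_of_lt hKr0) (by positivity)
      have h2 : (1 / (8 * (b : ℝ))) * (4 * (b : ℝ) * (N : ℝ)) = (N : ℝ) / 2 := by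
        field_simp; ring
      linarith
    have hJN : J ≤ N := by
      have : (J : ℝ) ≤ (N : ℝ) := by linarith
      exact_mod_cast this
    have h2JN : 2 * (J : ℝ) ≤ ε / 2 * (N : ℝ) := by
      have h1 : δ * (K ℓ : ℝ) ≤ (ε / (16 * b)) * (4 * (b : ℝ) * (N : ℝ)) :=
        mul_le_mul hδa hKr4bN (le_of_lt hKr0) (by positivity)
      have h2 : (ε / (16 * (b : ℝ))) * (4 * (b : ℝ) * (N : ℝ)) = ε * (N : ℝ) / 4 := by
        field_simp; ring
      linarith
    -- cosine estimate on the block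
    set η : ℝ := 32 * (1 / 2 : ℝ) ^ N with hηdef
    have hη0 : 0 ≤ η := by positivity
    have hηε : η ≤ ε / 2 := by
      have h1 : (1 / 2 : ℝ) ^ N ≤ (1 / 2 : ℝ) ^ N₁ :=
        pow_le_pow_of_le_one (by norm_num) (by norm_num) hNN1
      have := hN₁
      simp only [hηdef]
      nlinarith
    have hcos : ∀ n ∈ Finset.Ioc J N,
        1 - η ≤ Real.cos (2 * Real.pi * x * (b : ℝ) ^ n) := by
      intro n hn
      obtain ⟨hn1, hn2⟩ := Finset.mem_Ioc.1 hn
      have hnK : n ≤ K ℓ := le_trans hn2 hNK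
      have hz' : ∀ k, n + 1 ≤ k → k ≤ K ℓ → d k = 0 := by
        intro k hk1 hk2
        exact hz k (by omega) hk2
      have h1 := cos_lower b c hbc d hd x hx n (K ℓ) hnK hz'
      have hbn : (b : ℝ) ^ n / 2 ^ (K ℓ) ≤ (1 / 2 : ℝ) ^ N := by
        have e1 : b ^ n ≤ b ^ N := Nat.pow_le_pow_right (by omega) hn2
        have e2 : b ^ N ≤ (2 ^ b) ^ N := Nat.pow_le_pow_left (le_of_lt (Nat.lt_two_pow_self (n := b))) N
        have e4 : (b : ℝ) ^ n ≤ 2 ^ (b * N) := by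
          have : b ^ n ≤ 2 ^ (b * N) := by
            calc b ^ n ≤ b ^ N := e1
              _ ≤ (2 ^ b) ^ N := e2
              _ = 2 ^ (b * N) := by rw [← pow_mul]
          exact_mod_cast this
        have e5 : b * N + N ≤ K ℓ := by
          calc b * N + N ≤ b * N + b * N :=
                Nat.add_le_add_left (Nat.le_mul_of_pos_left N (by omega)) _
            _ = 2 * b * N := by ring
            _ ≤ K ℓ := hN2b
        rw [div_le_iff₀ (by positivity)]
        have e6 : (1 / 2 : ℝ) ^ N * 2 ^ (K ℓ) = 2 ^ (K ℓ - N) := by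
          have e7 : (2 : ℝ) ^ (K ℓ) = 2 ^ N * 2 ^ (K ℓ - N) := by
            rw [← pow_add, Nat.add_sub_cancel' hNK]
          rw [e7, div_pow, one_pow]
          field_simp
        rw [e6]
        calc (b : ℝ) ^ n ≤ 2 ^ (b * N) := e4
          _ ≤ 2 ^ (K ℓ - N) := by
              apply pow_le_pow_right₀ (by norm_num)
              omega
      have hu0 : (0 : ℝ) ≤ (b : ℝ) ^ n / 2 ^ (K ℓ) := by positivity
      have hhalf1 : (1 / 2 : ℝ) ^ N ≤ 1 := pow_le_one₀ (by norm_num) (by norm_num)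
      have h32 : 32 * ((b : ℝ) ^ n / 2 ^ (K ℓ)) ^ 2 ≤ η := by
        simp only [hηdef]
        nlinarith [hbn, hu0, hhalf1]
      linarith
    -- now sum up
    refine ⟨N, hNM0, ?_⟩
    have hsplit : ∑ n ∈ Finset.Icc 1 N, Real.cos (2 * Real.pi * x * (b : ℝ) ^ n)
        = ∑ n ∈ Finset.Ioc 0 J, Real.cos (2 * Real.pi * x * (b : ℝ) ^ n)
          + ∑ n ∈ Finset.Ioc J N, Real.cos (2 * Real.pi * x * (b : ℝ) ^ n) := by
      have hicc : Finset.Icc 1 N = Finset.Ioc 0 N := by rw [← Finset.Icc_add_one_left_eq_Ioc]; rfl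
      rw [hicc, ← Finset.sum_Ioc_consecutive _ (Nat.zero_le J) hJN]
    have hS1 : -(J : ℝ) ≤ ∑ n ∈ Finset.Ioc 0 J, Real.cos (2 * Real.pi * x * (b : ℝ) ^ n) := by
      calc -(J : ℝ) = ∑ _n ∈ Finset.Ioc 0 J, (-1 : ℝ) := by
            rw [Finset.sum_const, Nat.card_Ioc, nsmul_eq_mul]
            simp
        _ ≤ _ := Finset.sum_le_sum fun i _ => Real.neg_one_le_cos _
    have hS2 : ((N : ℝ) - (J : ℝ)) * (1 - η)
        ≤ ∑ n ∈ Finset.Ioc J N, Real.cos (2 * Real.pi * x * (b : ℝ) ^ n) := by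
      calc ((N : ℝ) - (J : ℝ)) * (1 - η) = ∑ _n ∈ Finset.Ioc J N, (1 - η) := by
            rw [Finset.sum_const, Nat.card_Ioc, nsmul_eq_mul, Nat.cast_sub hJN]
        _ ≤ _ := Finset.sum_le_sum hcos
    have hStot : ((N : ℝ) - (J : ℝ)) * (1 - η) - (J : ℝ)
        ≤ ∑ n ∈ Finset.Icc 1 N, Real.cos (2 * Real.pi * x * (b : ℝ) ^ n) := by
      rw [hsplit]; linarith
    have hmain : (1 - ε) * (N : ℝ) ≤ ((N : ℝ) - (J : ℝ)) * (1 - η) - (J : ℝ) := by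
      have e1 : (N : ℝ) * η ≤ (N : ℝ) * (ε / 2) :=
        mul_le_mul_of_nonneg_left hηε (by positivity)
      have e2 : (0 : ℝ) ≤ (J : ℝ) * η := mul_nonneg (by positivity) hη0
      nlinarith
    have hfN : 1 - ε ≤ f N := by
      simp only [hf]
      calc 1 - ε = (1 / (N : ℝ)) * ((1 - ε) * (N : ℝ)) := by field_simp
        _ ≤ (1 / (N : ℝ)) * ∑ n ∈ Finset.Icc 1 N, Real.cos (2 * Real.pi * x * (b : ℝ) ^ n) :=
            mul_le_mul_of_nonneg_left (le_trans hmain hStot) (by positivity)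
    exact hfN
  -- limsup = 1
  have hlim : limsup f atTop = 1 := by
    apply le_antisymm
    · exact limsup_le_of_le hbddBelow.isCoboundedUnder_le (Eventually.of_forall hub)
    · apply le_of_forall_sub_le
      intro ε hε
      exact le_limsup_of_frequently_le (hfreq ε hε) hbddAbove
  -- not uniformly distributed
  have hnud : ¬ UnifDistMod1 (fun n => x * (b : ℝ) ^ n) := by
    intro hUD
    have h1 := hUD 1 one_ne_zero
    have h2 : Tendsto (fun N : ℕ => ((1 / (N : ℂ)) * ∑ n ∈ Finset.Icc 1 N,
        Complex.exp (2 * Real.pi * Complex.I * ((1 : ℤ) : ℂ) * ((x * (b : ℝ) ^ n : ℝ) : ℂ))).re)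
        atTop (nhds ((0 : ℂ).re)) := (Complex.continuous_re.tendsto _).comp h1
    rw [Complex.zero_re] at h2
    have hft : Tendsto f atTop (nhds 0) := by
      apply h2.congr
      intro N
      simp only [hf]
      rw [show (1 / (N : ℂ)) = ((1 / (N : ℝ) : ℝ) : ℂ) by push_cast; ring]
      rw [Complex.re_ofReal_mul]
      congr 1
      rw [Complex.re_sum]
      apply Finset.sum_congr rfl
      intro n _
      rw [show (2 * (Real.pi : ℂ) * Complex.I * ((1 : ℤ) : ℂ) * ((x * (b : ℝ) ^ n : ℝ) : ℂ))
          = ((2 * Real.pi * x * (b : ℝ) ^ n : ℝ) : ℂ) * Complex.I by push_cast; ring]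
      rw [Complex.exp_ofReal_mul_I_re]
    exact one_ne_zero (hlim.symm.trans hft.limsup_eq)
  exact ⟨hlim, hnud, hnud⟩
end

section
/- Let K_ℓ = K^{ℓ·⌊√(log ℓ)⌋} (K ≥ 10 large) and ε_ℓ = 1/ℓ, and for R ∈ ℕ define t, T by K_{t−1} < √R ≤ K_t and K_{T−1} < R ≤ K_T. Then for every γ > 1 and all sufficiently large R, the product ∏_{ℓ=t+1}^{T−1} ε_ℓ is strictly less than K_T^{−γ}. -/
set_option maxHeartbeats 1000000

noncomputable def aseq (ℓ : ℕ) : ℕ := Nat.floor (Real.sqrt (Real.log ℓ))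

lemma aseq_mono {m n : ℕ} (h : m ≤ n) : aseq m ≤ aseq n := by
  rcases Nat.eq_zero_or_pos m with hm | hm
  · subst hm; simp [aseq]
  · exact Nat.floor_le_floor (Real.sqrt_le_sqrt (Real.log_le_log
      (by exact_mod_cast hm) (by exact_mod_cast h)))

lemma aseq_le_self (n : ℕ) : aseq n ≤ n := by
  rcases Nat.eq_zero_or_pos n with hn | hn
  · subst hn; simp [aseq]
  have h1 : Real.log n ≤ (n : ℝ) := by
    have := Real.log_le_sub_one_of_pos (x := (n:ℝ)) (by exact_mod_cast hn)
    linarith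
  have h2 : Real.sqrt (Real.log n) ≤ (n : ℝ) := by
    calc Real.sqrt (Real.log n) ≤ Real.sqrt n := Real.sqrt_le_sqrt h1
    _ ≤ (n:ℝ) := by
        rw [Real.sqrt_le_left (by positivity)]
        nlinarith [(Nat.one_le_cast (α := ℝ)).mpr hn]
  calc aseq n ≤ Nat.floor ((n:ℝ)) := Nat.floor_le_floor h2
  _ = n := Nat.floor_natCast n

lemma aseq_add_one {m n : ℕ} (hm : 4 ≤ m) (h : n ≤ 2*m + 2) : aseq n ≤ aseq m + 1 := by
  rcases Nat.eq_zero_or_pos n with hn | hn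
  · subst hn; simp [aseq]
  have hm0 : (0:ℝ) < m := by positivity
  have hlogm : 0 ≤ Real.log m := Real.log_natCast_nonneg m
  have hlog : Real.log n ≤ Real.log m + 1 := by
    have h1 : (n:ℝ) ≤ (5/2) * m := by
      have h1a : (n:ℝ) ≤ 2*m+2 := by exact_mod_cast h
      have h1b : (4:ℝ) ≤ m := by exact_mod_cast hm
      linarith
    have h2 : Real.log n ≤ Real.log ((5/2)*m) :=
      Real.log_le_log (by exact_mod_cast hn) h1
    rw [Real.log_mul (by norm_num) (ne_of_gt hm0)] at h2
    have h3 : Real.log (5/2) ≤ 1 := by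
      rw [Real.log_le_iff_le_exp (by norm_num)]
      have := Real.exp_one_gt_d9
      linarith
    linarith
  have hs : Real.sqrt (Real.log n) ≤ Real.sqrt (Real.log m) + 1 := by
    have h4 : Real.sqrt (Real.log n) ≤ Real.sqrt (Real.log m + 1) := Real.sqrt_le_sqrt hlog
    have h5 : Real.sqrt (Real.log m + 1) ≤ Real.sqrt (Real.log m) + 1 := by
      nlinarith [Real.sq_sqrt (show (0:ℝ) ≤ Real.log m + 1 by linarith),
        Real.sq_sqrt hlogm, Real.sqrt_nonneg (Real.log m + 1), Real.sqrt_nonneg (Real.log m)]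
    linarith
  calc aseq n ≤ Nat.floor (Real.sqrt (Real.log m) + 1) := Nat.floor_le_floor hs
  _ = aseq m + 1 := by rw [Nat.floor_add_one (Real.sqrt_nonneg _)]; rfl

lemma four_le_aseq {n : ℕ} (h : 3^16 ≤ n) : 4 ≤ aseq n := by
  have hn0 : 0 < n := lt_of_lt_of_le (by norm_num) h
  have hn : (0:ℝ) < n := by exact_mod_cast hn0
  have h16 : (16:ℝ) ≤ Real.log n := by
    rw [Real.le_log_iff_exp_le hn]
    have h1 : Real.exp 16 = (Real.exp 1)^(16:ℕ) := by
      rw [← Real.exp_nat_mul]; norm_num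
    have h2 : (Real.exp 1)^(16:ℕ) ≤ (3:ℝ)^(16:ℕ) :=
      pow_le_pow_left₀ (le_of_lt (Real.exp_pos 1)) (le_of_lt (by
        have := Real.exp_one_lt_d9; linarith)) 16
    have h3 : ((3:ℝ))^(16:ℕ) ≤ (n:ℝ) := by exact_mod_cast h
    linarith [h1 ▸ h2]
  have hs : (4:ℝ) ≤ Real.sqrt (Real.log n) := by
    rw [Real.le_sqrt (by norm_num) (by linarith)]
    norm_num; linarith
  exact Nat.le_floor hs

/-- The sequence K_ℓ = K^{ℓ·⌊√(log ℓ)⌋}. -/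
noncomputable def Kseq (K ℓ : ℕ) : ℕ :=
  K ^ (ℓ * Nat.floor (Real.sqrt (Real.log ℓ)))

lemma Kseq_def (K ℓ : ℕ) : Kseq K ℓ = K ^ (ℓ * aseq ℓ) := rfl

theorem admissibility_of_special_parameters :
    ∃ K₀ : ℕ, 10 ≤ K₀ ∧ ∀ K : ℕ, K₀ ≤ K →
      ∀ γ : ℝ, 1 < γ → ∃ R₀ : ℕ, ∀ R : ℕ, R₀ ≤ R →
        ∀ t T : ℕ, 1 ≤ t → 1 ≤ T →
          (Kseq K (t - 1) : ℝ) < Real.sqrt R → Real.sqrt R ≤ (Kseq K t : ℝ) →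
          (Kseq K (T - 1) : ℝ) < (R : ℝ) → (R : ℝ) ≤ (Kseq K T : ℝ) →
          (∏ ℓ ∈ Finset.Icc (t + 1) (T - 1), (1 / (ℓ : ℝ))) <
            (Kseq K T : ℝ) ^ (-γ) := by
  refine ⟨10, le_refl 10, ?_⟩
  intro K hK γ hγ
  have hK1 : 1 < K := by omega
  have hK1' : (1:ℝ) < K := by exact_mod_cast hK1
  have hK0' : (0:ℝ) < K := by linarith
  have hlogK : 0 < Real.log K := Real.log_pos hK1'
  set M : ℕ := max (3^16 + 5) (Nat.ceil (Real.exp ((8*γ*Real.log K)^2)) + 1) with hMdef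
  have hM1 : 3^16 + 5 ≤ M := le_max_left _ _
  have hM2 : Nat.ceil (Real.exp ((8*γ*Real.log K)^2)) + 1 ≤ M := le_max_right _ _
  refine ⟨K ^ (2*M^2) + 1, ?_⟩
  intro R hR t T ht hT h1 h2 h3 h4
  have hRpos : (0:ℝ) < R := by
    have : 1 ≤ R := le_trans (Nat.succ_le_succ (Nat.zero_le _)) hR
    exact_mod_cast this
  -- R ≤ (Kseq K t)^2 over ℝ
  have hRle : (R:ℝ) ≤ (Kseq K t : ℝ)^2 := by
    have := Real.sq_sqrt (le_of_lt hRpos)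
    nlinarith [Real.sqrt_nonneg (R:ℝ)]
  -- M ≤ t
  have htM : M ≤ t := by
    by_contra hc
    push_neg at hc
    have he : t * aseq t ≤ M^2 := by
      have := aseq_le_self t
      nlinarith
    have h5 : (Kseq K t : ℕ)^2 ≤ K ^ (2*M^2) := by
      rw [Kseq_def, ← pow_mul]
      exact Nat.pow_le_pow_right (by omega) (by omega)
    have h6 : (R:ℝ) ≤ ((K ^ (2*M^2) : ℕ) : ℝ) := by
      refine le_trans hRle ?_
      exact_mod_cast h5
    have h7 : R ≤ K ^ (2*M^2) := by exact_mod_cast h6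
    omega
  -- M ≤ T
  have hTM : M ≤ T := by
    by_contra hc
    push_neg at hc
    have he : T * aseq T ≤ 2*M^2 := by
      have := aseq_le_self T
      nlinarith
    have h5 : (Kseq K T : ℕ) ≤ K ^ (2*M^2) := by
      rw [Kseq_def]
      exact Nat.pow_le_pow_right (by omega) he
    have h6 : (R:ℝ) ≤ ((K ^ (2*M^2) : ℕ) : ℝ) := le_trans h4 (by exact_mod_cast h5)
    have h7 : R ≤ K ^ (2*M^2) := by exact_mod_cast h6
    omega
  have h316t : 3^16 ≤ t - 1 := by omega
  have h316T : 3^16 ≤ T - 1 := by omega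
  have ha_t1 : 4 ≤ aseq (t-1) := four_le_aseq h316t
  have ha_t : 4 ≤ aseq t := four_le_aseq (by omega)
  have ha_T1 : 4 ≤ aseq (T-1) := four_le_aseq h316T
  have ha_T : 4 ≤ aseq T := four_le_aseq (by omega)
  -- exponent inequality E1 : (T-1)*aseq(T-1) < 2*(t*aseq t)
  have E1 : (T-1) * aseq (T-1) < 2 * (t * aseq t) := by
    have hn1 : (Kseq K (T-1) : ℝ) < ((Kseq K t)^2 : ℕ) := by
      push_cast
      exact lt_of_lt_of_le h3 hRle
    have hn2 : Kseq K (T-1) < (Kseq K t)^2 := by exact_mod_cast hn1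
    rw [Kseq_def, Kseq_def, ← pow_mul] at hn2
    have := (Nat.pow_lt_pow_iff_right hK1).mp hn2
    omega
  -- exponent inequality E2 : 2*((t-1)*aseq(t-1)) < T*aseq T
  have E2 : 2 * ((t-1) * aseq (t-1)) < T * aseq T := by
    have hs1 : (Kseq K (t-1) : ℝ) < Real.sqrt (Kseq K T) :=
      lt_of_lt_of_le h1 (Real.sqrt_le_sqrt h4)
    have hs2 : ((Kseq K (t-1))^2 : ℕ) < (Kseq K T : ℝ) := by
      push_cast
      exact (Real.lt_sqrt (by positivity)).mp hs1
    have hn2 : (Kseq K (t-1))^2 < Kseq K T := by exact_mod_cast hs2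
    rw [Kseq_def, Kseq_def, ← pow_mul] at hn2
    have := (Nat.pow_lt_pow_iff_right hK1).mp hn2
    omega
  -- t < T
  have htT : t < T := by
    by_contra hc
    push_neg at hc
    have hm1 : T * aseq T ≤ t * aseq t := Nat.mul_le_mul hc (aseq_mono hc)
    have hm2 : aseq t ≤ aseq (t-1) + 1 := aseq_add_one (by omega) (by omega)
    have hm3 : 2 * ((t-1) * aseq (t-1)) < t * (aseq (t-1) + 1) :=
      lt_of_lt_of_le (lt_of_lt_of_le E2 hm1) (Nat.mul_le_mul_left t hm2)
    have hm3' : 2 * (((t:ℝ)-1) * (aseq (t-1) : ℝ)) < (t:ℝ) * ((aseq (t-1):ℝ) + 1) := by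
      have := (Nat.cast_lt (α := ℝ)).mpr hm3
      push_cast [Nat.cast_sub ht] at this
      linarith
    have htt : (5:ℝ) ≤ (t:ℝ) := by exact_mod_cast (show 5 ≤ t by omega)
    have h4A : (4:ℝ) ≤ (aseq (t-1) : ℝ) := by exact_mod_cast ha_t1
    have hprod : 4*((t:ℝ)-2) ≤ (aseq (t-1):ℝ)*((t:ℝ)-2) :=
      mul_le_mul_of_nonneg_right h4A (by linarith)
    nlinarith [hprod, hm3', htt]
  -- T - 1 < 2*t
  have hT2t : T - 1 < 2*t := by
    have hm1 : aseq t ≤ aseq (T-1) := aseq_mono (by omega)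
    have : (T-1) * aseq (T-1) < 2*t * aseq (T-1) := by
      calc (T-1) * aseq (T-1) < 2 * (t * aseq t) := E1
      _ ≤ 2*t*aseq (T-1) := by
          rw [mul_assoc]
          exact Nat.mul_le_mul_left 2 (Nat.mul_le_mul_left t hm1)
    exact Nat.lt_of_mul_lt_mul_right this
  have haT : aseq T ≤ aseq (t-1) + 1 := aseq_add_one (by omega) (by omega)
  -- real versions
  have hT16 : (16:ℝ) ≤ (T:ℝ) := by exact_mod_cast (show (16:ℕ) ≤ T by omega)
  have ht0' : (1:ℝ) ≤ (t:ℝ) := by exact_mod_cast ht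
  have hTpos : (0:ℝ) < (T:ℝ) := by linarith
  -- cardinality bound
  have hcard : (Finset.Icc (t+1) (T-1)).card = T - (t+1) := by
    rw [Nat.card_Icc]
    omega
  have hcastcard : ((T - (t+1) : ℕ) : ℝ) = (T:ℝ) - (t:ℝ) - 1 := by
    push_cast [Nat.cast_sub (show t+1 ≤ T by omega)]
    ring
  -- count lower bound
  have hcount : (T:ℝ)/4 ≤ (T:ℝ) - (t:ℝ) - 1 := by
    have hA4 : (4:ℝ) ≤ (aseq (t-1) : ℝ) := by exact_mod_cast ha_t1
    have hE2' : 2 * (((t:ℝ)-1) * (aseq (t-1):ℝ)) < (T:ℝ) * (aseq T : ℝ) := by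
      have h := (Nat.cast_lt (α := ℝ)).mpr E2
      push_cast [Nat.cast_sub ht] at h
      linarith
    have haT' : (aseq T : ℝ) ≤ (aseq (t-1) : ℝ) + 1 := by exact_mod_cast haT
    have step1 : (T:ℝ) * (aseq T : ℝ) ≤ (T:ℝ) * ((aseq (t-1):ℝ) * (5/4)) := by
      apply mul_le_mul_of_nonneg_left _ (le_of_lt hTpos)
      linarith
    have step2 : 2 * ((t:ℝ) - 1) < (T:ℝ) * (5/4) := by
      have h5 : 2 * (((t:ℝ)-1) * (aseq (t-1):ℝ)) < (T:ℝ) * ((aseq (t-1):ℝ) * (5/4)) :=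
        lt_of_lt_of_le hE2' step1
      nlinarith
    linarith
  -- product lower bound
  set P : ℝ := ∏ ℓ ∈ Finset.Icc (t + 1) (T - 1), (ℓ : ℝ) with hPdef
  have hprod1 : ((t+1 : ℕ):ℝ) ^ ((Finset.Icc (t+1) (T-1)).card) ≤ P := by
    rw [← Finset.prod_const]
    apply Finset.prod_le_prod
    · intro i _; positivity
    · intro i hi
      have := (Finset.mem_Icc.mp hi).1
      exact_mod_cast this
  have hhalf : (1:ℝ) ≤ (T:ℝ)/2 := by linarith
  have hprod2 : ((T:ℝ)/2) ^ ((Finset.Icc (t+1) (T-1)).card) ≤ ((t+1 : ℕ):ℝ) ^ ((Finset.Icc (t+1) (T-1)).card) := by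
    apply pow_le_pow_left₀ (by linarith)
    have h2t : (T:ℝ) ≤ 2*(t:ℝ) + 2 := by
      have h6 : T ≤ 2*t := by omega
      have h7 := (Nat.cast_le (α := ℝ)).mpr h6
      push_cast at h7
      linarith
    push_cast
    linarith
  have hprod3 : ((T:ℝ)/2) ^ (((T:ℝ)/4) : ℝ) ≤ P := by
    calc ((T:ℝ)/2) ^ (((T:ℝ)/4):ℝ)
        ≤ ((T:ℝ)/2) ^ ((((Finset.Icc (t+1) (T-1)).card : ℕ)):ℝ) := by
          apply Real.rpow_le_rpow_of_exponent_le hhalf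
          rw [hcard, hcastcard]
          exact hcount
    _ = ((T:ℝ)/2) ^ ((Finset.Icc (t+1) (T-1)).card) := Real.rpow_natCast _ _
    _ ≤ ((t+1 : ℕ):ℝ) ^ ((Finset.Icc (t+1) (T-1)).card) := hprod2
    _ ≤ P := hprod1
  -- main exponential comparison
  have hTgt : Real.exp ((8*γ*Real.log K)^2) < (T:ℝ) := by
    have hceil : (Nat.ceil (Real.exp ((8*γ*Real.log K)^2)) : ℝ) < (T:ℝ) := by
      exact_mod_cast (show Nat.ceil (Real.exp ((8*γ*Real.log K)^2)) < T by omega)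
    exact lt_of_le_of_lt (Nat.le_ceil _) hceil
  have hlogT : (8*γ*Real.log K)^2 < Real.log (T:ℝ) := (Real.lt_log_iff_exp_lt hTpos).mpr hTgt
  have hlogTnn : 0 ≤ Real.log (T:ℝ) := le_trans (by positivity) (le_of_lt hlogT)
  have h8s : 8*γ*Real.log K < Real.sqrt (Real.log (T:ℝ)) :=
    (Real.lt_sqrt (by positivity)).mpr hlogT
  have hss : Real.sqrt (Real.log (T:ℝ)) * Real.sqrt (Real.log (T:ℝ)) = Real.log (T:ℝ) :=
    Real.mul_self_sqrt hlogTnn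
  have hγKpos : 0 < γ * Real.log K := mul_pos (by linarith) hlogK
  have hspos : 0 < Real.sqrt (Real.log (T:ℝ)) := by linarith
  have haTs : ((aseq T : ℕ) : ℝ) ≤ Real.sqrt (Real.log (T:ℝ)) :=
    Nat.floor_le (Real.sqrt_nonneg _)
  have hlog2 : Real.log (T:ℝ) / 2 ≤ Real.log ((T:ℝ)/2) := by
    have e4 : Real.log ((T:ℝ)/2) = Real.log (T:ℝ) - Real.log 2 := by
      rw [Real.log_div (by linarith) (by norm_num)]
    have e5 : Real.log 4 = 2 * Real.log 2 := by
      rw [show (4:ℝ) = 2^2 by norm_num, Real.log_pow]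
      push_cast; ring
    have e6 : Real.log 4 ≤ Real.log (T:ℝ) := Real.log_le_log (by norm_num) (by linarith)
    linarith
  -- key inequality on exponents
  have hkey : ((T * aseq T : ℕ) : ℝ) * Real.log K * γ < Real.log ((T:ℝ)/2) * ((T:ℝ)/4) := by
    have hγK : γ * Real.log K < Real.sqrt (Real.log (T:ℝ)) / 8 := by linarith
    have c0 : (aseq T : ℝ) * (Real.log K * γ) ≤ Real.sqrt (Real.log (T:ℝ)) * (Real.log K * γ) := by
      apply mul_le_mul_of_nonneg_right haTs
      positivity
    have c1 : ((T * aseq T : ℕ):ℝ) * Real.log K * γ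
        ≤ (T:ℝ) * Real.sqrt (Real.log (T:ℝ)) * (γ * Real.log K) := by
      push_cast
      have h := mul_le_mul_of_nonneg_left c0 (le_of_lt hTpos)
      nlinarith [h]
    have c2 : (T:ℝ) * Real.sqrt (Real.log (T:ℝ)) * (γ * Real.log K)
        < (T:ℝ) * Real.sqrt (Real.log (T:ℝ)) * (Real.sqrt (Real.log (T:ℝ))/8) := by
      apply mul_lt_mul_of_pos_left hγK
      positivity
    have c3 : (T:ℝ) * Real.sqrt (Real.log (T:ℝ)) * (Real.sqrt (Real.log (T:ℝ))/8)
        = (T:ℝ) * Real.log (T:ℝ) / 8 := by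
      linear_combination ((T:ℝ)/8) * hss
    have c5 : ((T:ℝ)/4) * (Real.log (T:ℝ) / 2) ≤ ((T:ℝ)/4) * Real.log ((T:ℝ)/2) :=
      mul_le_mul_of_nonneg_left hlog2 (by linarith)
    linarith [c1, c2, c3, c5]
  -- assemble : (Kseq K T)^γ < P
  have hKTcast : (Kseq K T : ℝ) = (K:ℝ) ^ (T * aseq T) := by
    rw [Kseq_def]; push_cast; ring
  have hKTpos : (0:ℝ) < (Kseq K T : ℝ) := by
    rw [hKTcast]; positivity
  have hmain : (Kseq K T : ℝ) ^ γ < P := by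
    have e1 : (Kseq K T : ℝ) ^ γ = Real.exp (((T * aseq T : ℕ):ℝ) * Real.log K * γ) := by
      rw [Real.rpow_def_of_pos hKTpos, hKTcast, Real.log_pow]
    have e2 : ((T:ℝ)/2) ^ (((T:ℝ)/4):ℝ) = Real.exp (Real.log ((T:ℝ)/2) * ((T:ℝ)/4)) :=
      Real.rpow_def_of_pos (by linarith) _
    calc (Kseq K T : ℝ) ^ γ = Real.exp (((T * aseq T : ℕ):ℝ) * Real.log K * γ) := e1
    _ < Real.exp (Real.log ((T:ℝ)/2) * ((T:ℝ)/4)) := Real.exp_lt_exp.mpr hkey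
    _ = ((T:ℝ)/2) ^ (((T:ℝ)/4):ℝ) := e2.symm
    _ ≤ P := hprod3
  -- finish
  have hrpow_pos : (0:ℝ) < (Kseq K T : ℝ) ^ γ := Real.rpow_pos_of_pos hKTpos γ
  have hfin : P⁻¹ < ((Kseq K T : ℝ) ^ γ)⁻¹ :=
    (inv_lt_inv₀ (lt_trans hrpow_pos hmain) hrpow_pos).mpr hmain
  calc (∏ ℓ ∈ Finset.Icc (t + 1) (T - 1), (1 / (ℓ : ℝ))) = P⁻¹ := by
        rw [hPdef, ← Finset.prod_inv_distrib]
        simp [one_div]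
  _ < ((Kseq K T : ℝ) ^ γ)⁻¹ := hfin
  _ = (Kseq K T : ℝ) ^ (-γ) := (Real.rpow_neg (le_of_lt hKTpos) γ).symm
end
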